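/- Let X be a bounded geometry metric space with the metric sparsification property. Then X has ULA_μ. -/

import Mathlib

/-- `N_R(E)`, the `R`-neighbourhood of `E`. -/
def nbhd {X : Type*} [MetricSpace X] (R : ℝ) (E : Set X) : Set X :=
  {y | ∃ e ∈ E, dist y e ≤ R}

/-- `∂_R E = N_R(E) \ E`. -/
def bdry {X : Type*} [MetricSpace X] (R : ℝ) (E : Set X) : Set X :=
  nbhd R E \ E

/-- Bounded geometry. -/
def BoundedGeometry (X : Type*) [MetricSpace X] : Prop :=
  ∀ R : ℝ, 0 < R → ∃ N : ℕ, ∀ x : X,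
    {y | dist x y ≤ R}.Finite ∧ {y | dist x y ≤ R}.ncard ≤ N

/-- A probability measure on `X`, as a function. -/
def IsProbFn {X : Type*} (μ : X → ℝ) : Prop :=
  (∀ x, 0 ≤ μ x) ∧ Summable μ ∧ ∑' x, μ x = 1

/-- `μ(E)`. -/
noncomputable def measOf {X : Type*} (μ : X → ℝ) (E : Set X) : ℝ := ∑' x : E, μ x

/-- Uniform local amenability. -/
def ULA (X : Type*) [MetricSpace X] : Prop :=
  ∀ R : ℝ, 0 < R → ∀ ε : ℝ, 0 < ε → ∃ S : ℝ, 0 < S ∧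
    ∀ F : Set X, F.Finite → ∃ E : Set X, E.Finite ∧
      EMetric.diam E ≤ ENNReal.ofReal S ∧
      ((bdry R E ∩ F).ncard : ℝ) < ε * ((E ∩ F).ncard : ℝ)

/-- Measured uniform local amenability. -/
def ULAmu (X : Type*) [MetricSpace X] : Prop :=
  ∀ R : ℝ, 0 < R → ∀ ε : ℝ, 0 < ε → ∃ S : ℝ, 0 < S ∧
    ∀ μ : X → ℝ, IsProbFn μ → ∃ E : Set X, E.Finite ∧
      EMetric.diam E ≤ ENNReal.ofReal S ∧
      measOf μ (bdry R E) < ε * measOf μ E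

/-- Coarse embedding. -/
def CoarseEmbedding {X Y : Type*} [MetricSpace X] [MetricSpace Y] (f : X → Y) : Prop :=
  ∃ ρm ρp : ℝ → ℝ, Monotone ρm ∧ Monotone ρp ∧
    Filter.Tendsto ρm Filter.atTop Filter.atTop ∧
    ∀ x₁ x₂ : X, ρm (dist x₁ x₂) ≤ dist (f x₁) (f x₂) ∧
      dist (f x₁) (f x₂) ≤ ρp (dist x₁ x₂)

/-- The metric sparsification property with constant $c$. -/
def MSPwith (X : Type*) [MetricSpace X] (c : ℝ) : Prop :=
  ∀ R : ℝ, 0 < R → ∃ S : ℝ, 0 < S ∧ ∀ μ : X → ℝ, IsProbFn μ →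
    ∃ (ι : Type) (Ω : ι → Set X),
      (∀ i, EMetric.diam (Ω i) ≤ ENNReal.ofReal S) ∧
      (∀ i j, i ≠ j → ∀ a ∈ Ω i, ∀ b ∈ Ω j, R < dist a b) ∧
      c ≤ measOf μ (⋃ i, Ω i)

section aux
variable {X : Type*} {μ : X → ℝ}

lemma measOf_eq (E : Set X) : measOf μ E = ∑' x, E.indicator μ x := tsum_subtype E μ

lemma measOf_nonneg (hpos : ∀ x, 0 ≤ μ x) (E : Set X) : 0 ≤ measOf μ E :=
  tsum_nonneg fun _ => hpos _

lemma measOf_empty : measOf μ (∅ : Set X) = 0 := by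
  simp [measOf_eq]

lemma measOf_mono (hpos : ∀ x, 0 ≤ μ x) (hsum : Summable μ) {A B : Set X} (h : A ⊆ B) :
    measOf μ A ≤ measOf μ B := by
  rw [measOf_eq, measOf_eq]
  refine Summable.tsum_le_tsum (fun x => ?_) (hsum.indicator A) (hsum.indicator B)
  by_cases hx : x ∈ A
  · rw [Set.indicator_of_mem hx, Set.indicator_of_mem (h hx)]
  · rw [Set.indicator_of_notMem hx]
    exact Set.indicator_nonneg (fun y _ => hpos y) x

lemma measOf_union_le (hpos : ∀ x, 0 ≤ μ x) (hsum : Summable μ) (A B : Set X) :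
    measOf μ (A ∪ B) ≤ measOf μ A + measOf μ B := by
  rw [measOf_eq, measOf_eq, measOf_eq, ← Summable.tsum_add (hsum.indicator A) (hsum.indicator B)]
  refine Summable.tsum_le_tsum (fun x => ?_) (hsum.indicator _) ((hsum.indicator A).add (hsum.indicator B))
  have hA := Set.indicator_nonneg (fun y (_ : y ∈ A) => hpos y) x
  have hB := Set.indicator_nonneg (fun y (_ : y ∈ B) => hpos y) x
  by_cases ha : x ∈ A
  · rw [Set.indicator_of_mem (Set.mem_union_left _ ha), Set.indicator_of_mem ha]; linarith
  · by_cases hb : x ∈ B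
    · rw [Set.indicator_of_mem (Set.mem_union_right _ hb), Set.indicator_of_notMem ha,
        Set.indicator_of_mem hb]; linarith
    · rw [Set.indicator_of_notMem (by simp [ha, hb] : x ∉ A ∪ B),
        Set.indicator_of_notMem ha, Set.indicator_of_notMem hb]; linarith

lemma measOf_biUnion_le (hpos : ∀ x, 0 ≤ μ x) (hsum : Summable μ) {ι : Type*}
    (J : Finset ι) (A : ι → Set X) :
    measOf μ (⋃ i ∈ J, A i) ≤ ∑ i ∈ J, measOf μ (A i) := by
  classical
  induction J using Finset.induction with
  | empty => simp [measOf_empty]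
  | @insert a s ha ih =>
    rw [Finset.sum_insert ha]
    calc measOf μ (⋃ i ∈ insert a s, A i) = measOf μ (A a ∪ ⋃ i ∈ s, A i) := by
          rw [Finset.set_biUnion_insert]
    _ ≤ measOf μ (A a) + measOf μ (⋃ i ∈ s, A i) := measOf_union_le hpos hsum _ _
    _ ≤ _ := by linarith

lemma sum_measOf_le (hpos : ∀ x, 0 ≤ μ x) (hsum : Summable μ) {ι : Type*}
    (J : Finset ι) (A : ι → Set X)
    (hdisj : ∀ i ∈ J, ∀ j ∈ J, i ≠ j → ∀ x, x ∈ A i → x ∉ A j) :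
    ∑ i ∈ J, measOf μ (A i) ≤ measOf μ (⋃ i ∈ J, A i) := by
  classical
  have hsummand : ∀ i, Summable ((A i).indicator μ) := fun i => hsum.indicator _
  calc ∑ i ∈ J, measOf μ (A i) = ∑ i ∈ J, ∑' x, (A i).indicator μ x := by
        simp only [measOf_eq]
  _ = ∑' x, ∑ i ∈ J, (A i).indicator μ x := (Summable.tsum_finsetSum (fun i _ => hsummand i)).symm
  _ ≤ ∑' x, (⋃ i ∈ J, A i).indicator μ x := by
      refine Summable.tsum_le_tsum (fun x => ?_) (summable_sum fun i _ => hsummand i) (hsum.indicator _)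
      by_cases hx : ∃ i ∈ J, x ∈ A i
      · obtain ⟨i₀, hi₀J, hi₀⟩ := hx
        rw [Finset.sum_eq_single i₀
          (fun j hjJ hji => Set.indicator_of_notMem (hdisj i₀ hi₀J j hjJ (Ne.symm hji) x hi₀) μ)
          (fun h => absurd hi₀J h)]
        have hmem : x ∈ ⋃ i ∈ J, A i := Set.mem_biUnion hi₀J hi₀
        rw [Set.indicator_of_mem hi₀]
        exact le_of_eq (Set.indicator_of_mem hmem μ).symm
      · push_neg at hx
        rw [Finset.sum_eq_zero (fun i hi => Set.indicator_of_notMem (hx i hi) μ)]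
        exact Set.indicator_nonneg (fun y _ => hpos y) x
  _ = measOf μ (⋃ i ∈ J, A i) := (measOf_eq _).symm

lemma measOf_compl (hsum : Summable μ) (htot : ∑' x, μ x = 1) (A : Set X) :
    measOf μ Aᶜ = 1 - measOf μ A := by
  have h : measOf μ A + measOf μ Aᶜ = 1 := by
    rw [measOf, measOf, ← htot]
    exact Summable.tsum_subtype_add_tsum_subtype_compl hsum A
  linarith

lemma measOf_finset (F : Finset X) : measOf μ (↑F : Set X) = ∑ x ∈ F, μ x :=
  F.tsum_subtype μ

end aux

/-- Half of Theorem 3.8: the metric sparsification property implies $ULA_\mu$.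
(By Chen–Tessera–Wang–Yu, $MSP$ for one constant $c \in (0,1)$ implies it for all such
constants, so $MSP$ is taken here with every constant $c \in (0,1)$.) -/
theorem msp_implies_ulamu {X : Type*} [MetricSpace X] (hbg : BoundedGeometry X)
    (hmsp : ∀ c : ℝ, 0 < c → c < 1 → MSPwith X c) : ULAmu X := by
  intro R hR ε hε
  classical
  have h2ε : (0:ℝ) < 2 + ε := by linarith
  set c : ℝ := 2 / (2 + ε) with hcdef
  set δ : ℝ := 1 / (2 * (2 + ε)) with hδdef
  have hc0 : 0 < c := by positivity
  have hc1 : c < 1 := by rw [hcdef, div_lt_one h2ε]; linarith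
  have hδ0 : 0 < δ := by positivity
  have key : 1 - c < ε * (c - δ) := by
    rw [hcdef, hδdef]
    rw [div_sub_div _ _ (ne_of_gt h2ε) (by positivity)]
    rw [show (2:ℝ) * (2 * (2 + ε)) - (2 + ε) * 1 = 3 * (2 + ε) by ring]
    have h1 : (1:ℝ) - 2 / (2 + ε) = ε / (2 + ε) := by field_simp; ring
    rw [h1]
    rw [div_lt_iff₀ h2ε]
    rw [show ε * (3 * (2 + ε) / ((2 + ε) * (2 * (2 + ε)))) * (2 + ε)
        = ε * ((3 * (2 + ε)) * (2 + ε) / ((2 + ε) * (2 * (2 + ε)))) by ring]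
    rw [show ((3:ℝ) * (2 + ε)) * (2 + ε) / ((2 + ε) * (2 * (2 + ε))) = 3 / 2 by
      field_simp]
    linarith
  obtain ⟨S, hS, hmain⟩ := hmsp c hc0 hc1 (2 * R) (by linarith)
  obtain ⟨N, hN⟩ := hbg S hS
  refine ⟨S, hS, ?_⟩
  intro μ hμ
  obtain ⟨hpos, hsum, htot⟩ := hμ
  obtain ⟨ι, Ω, hdiam, hsep, hmeas⟩ := hmain μ ⟨hpos, hsum, htot⟩
  -- finiteness of each piece
  have hfin : ∀ i : ι, (Ω i).Finite := by
    intro i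
    rcases Set.eq_empty_or_nonempty (Ω i) with h | ⟨x₀, hx₀⟩
    · simp [h]
    · refine Set.Finite.subset (hN x₀).1 ?_
      intro y hy
      have h1 : edist x₀ y ≤ ENNReal.ofReal S :=
        le_trans (EMetric.edist_le_diam_of_mem hx₀ hy) (hdiam i)
      have h2 : ENNReal.ofReal (dist x₀ y) ≤ ENNReal.ofReal S := by rwa [← edist_dist]
      exact (ENNReal.ofReal_le_ofReal_iff hS.le).mp h2
  by_contra hcon
  push_neg at hcon
  have hbad : ∀ i : ι, ε * measOf μ (Ω i) ≤ measOf μ (bdry R (Ω i)) :=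
    fun i => hcon (Ω i) (hfin i) (hdiam i)
  -- ι is nonempty
  have hΩpos : 0 < measOf μ (⋃ i, Ω i) := lt_of_lt_of_le hc0 hmeas
  have hι : Nonempty ι := by
    by_contra h
    rw [not_nonempty_iff] at h
    have he : (⋃ i, Ω i) = ∅ := Set.iUnion_of_empty Ω
    rw [he, measOf_empty] at hΩpos
    exact lt_irrefl _ hΩpos
  -- finite set carrying most of the mass
  have hhs : HasSum μ 1 := htot ▸ hsum.hasSum
  have hev : ∀ᶠ s : Finset X in Filter.atTop, 1 - δ < ∑ x ∈ s, μ x :=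
    Filter.Tendsto.eventually hhs (eventually_gt_nhds (by linarith))
  obtain ⟨F, hF⟩ := hev.exists
  have hFc : measOf μ ((↑F : Set X)ᶜ) ≤ δ := by
    have h1 := measOf_compl hsum htot (↑F : Set X)
    have h2 := measOf_finset (μ := μ) F
    linarith
  -- selection function
  let g : X → ι := fun x => if h : ∃ i, x ∈ Ω i then h.choose else Classical.arbitrary ι
  have hg : ∀ x, (∃ i, x ∈ Ω i) → x ∈ Ω (g x) := by
    intro x hx
    simp only [g, dif_pos hx]
    exact hx.choose_spec
  let J : Finset ι := F.image g
  -- A1 : c - δ ≤ measOf μ ((⋃ i, Ω i) ∩ ↑F)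
  have hsub1 : (⋃ i, Ω i) ⊆ ((⋃ i, Ω i) ∩ ↑F) ∪ ((↑F : Set X)ᶜ) := by
    intro x hx
    by_cases hxF : x ∈ (↑F : Set X)
    · exact Or.inl ⟨hx, hxF⟩
    · exact Or.inr hxF
  have A1 : c - δ ≤ measOf μ ((⋃ i, Ω i) ∩ ↑F) := by
    have := le_trans (measOf_mono hpos hsum hsub1)
      (measOf_union_le hpos hsum _ _)
    linarith [le_trans hmeas this]
  -- A2
  have hsub2 : (⋃ i, Ω i) ∩ ↑F ⊆ ⋃ i ∈ J, Ω i := by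
    rintro x ⟨hxΩ, hxF⟩
    obtain ⟨i, hi⟩ := Set.mem_iUnion.mp hxΩ
    exact Set.mem_biUnion (Finset.mem_image_of_mem g hxF) (hg x ⟨i, hi⟩)
  have A2 : measOf μ ((⋃ i, Ω i) ∩ ↑F) ≤ ∑ i ∈ J, measOf μ (Ω i) :=
    le_trans (measOf_mono hpos hsum hsub2) (measOf_biUnion_le hpos hsum J Ω)
  -- A3
  have A3 : ∑ i ∈ J, ε * measOf μ (Ω i) ≤ ∑ i ∈ J, measOf μ (bdry R (Ω i)) :=
    Finset.sum_le_sum fun i _ => hbad i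
  -- A4 : disjointness of boundaries and inclusion in complement
  have hbdisj : ∀ i ∈ J, ∀ j ∈ J, i ≠ j → ∀ x, x ∈ bdry R (Ω i) → x ∉ bdry R (Ω j) := by
    intro i _ j _ hij x hxi hxj
    obtain ⟨⟨a, ha, hda⟩, _⟩ := hxi
    obtain ⟨⟨b, hb, hdb⟩, _⟩ := hxj
    have := hsep i j hij a ha b hb
    have : dist a b ≤ dist a x + dist x b := dist_triangle a x b
    have hax : dist a x ≤ R := by rwa [dist_comm]
    linarith [hsep i j hij a ha b hb]
  have hbsub : (⋃ i ∈ J, bdry R (Ω i)) ⊆ (⋃ i, Ω i)ᶜ := by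
    intro x hx
    obtain ⟨i, _, hxi⟩ := Set.mem_iUnion₂.mp hx
    obtain ⟨⟨a, ha, hda⟩, hnot⟩ := hxi
    intro hxΩ
    obtain ⟨j, hj⟩ := Set.mem_iUnion.mp hxΩ
    by_cases hij : j = i
    · exact hnot (hij ▸ hj)
    · have h1 := hsep i j (Ne.symm hij) a ha x hj
      have hax : dist a x ≤ R := by rwa [dist_comm]
      linarith
  have A4 : ∑ i ∈ J, measOf μ (bdry R (Ω i)) ≤ 1 - c := by
    calc ∑ i ∈ J, measOf μ (bdry R (Ω i)) ≤ measOf μ (⋃ i ∈ J, bdry R (Ω i)) :=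
          sum_measOf_le hpos hsum J _ hbdisj
    _ ≤ measOf μ ((⋃ i, Ω i)ᶜ) := measOf_mono hpos hsum hbsub
    _ = 1 - measOf μ (⋃ i, Ω i) := measOf_compl hsum htot _
    _ ≤ 1 - c := by linarith
  -- combine
  have final : ε * (c - δ) ≤ 1 - c := by
    calc ε * (c - δ) ≤ ε * measOf μ ((⋃ i, Ω i) ∩ ↑F) :=
          mul_le_mul_of_nonneg_left A1 hε.le
    _ ≤ ε * ∑ i ∈ J, measOf μ (Ω i) := mul_le_mul_of_nonneg_left A2 hε.le
    _ = ∑ i ∈ J, ε * measOf μ (Ω i) := Finset.mul_sum _ _ _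
    _ ≤ ∑ i ∈ J, measOf μ (bdry R (Ω i)) := A3
    _ ≤ 1 - c := A4
  linarith
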